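/- Theorem 14 (progressive-heteronomous graphs): a finite digraph G contains a contour — a directed cycle possessing both an entry edge and an exit edge — if and only if for every natural number M there exists j > M such that the iterated line digraph L^j(G) contains a complicated vertex; i.e., G has no heteronomous bound: complicated vertices (and hence increases of the cyclomatic number at the next step) keep arising at arbitrarily late converting steps. -/

import Mathlib

universe u

/-- The line digraph of a digraph `G`: vertices are the edges of `G`. -/
def lineDigraph {V : Type u} (G : Digraph V) : Digraph {e : V × V // G.Adj e.1 e.2} where
  Adj e f := e.1.2 = f.1.1

instance {V : Type u} (G : Digraph V) [Fintype V] [DecidableRel G.Adj] :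
    Fintype {e : V × V // G.Adj e.1 e.2} :=
  Subtype.fintype _

instance {V : Type u} (G : Digraph V) [DecidableEq V] :
    DecidableRel (lineDigraph G).Adj :=
  fun e f => inferInstanceAs (Decidable (e.1.2 = f.1.1))

/-- The finset of (directed) edges of `G`. -/
def edgeFinset {V : Type u} (G : Digraph V) [Fintype V] [DecidableRel G.Adj] :
    Finset (V × V) :=
  Finset.univ.filter (fun p => G.Adj p.1 p.2)

/-- The indegree of a vertex. -/
def indeg {V : Type u} (G : Digraph V) [Fintype V] [DecidableRel G.Adj] (v : V) : ℕ :=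
  (Finset.univ.filter (fun u => G.Adj u v)).card

/-- The outdegree of a vertex. -/
def outdeg {V : Type u} (G : Digraph V) [Fintype V] [DecidableRel G.Adj] (v : V) : ℕ :=
  (Finset.univ.filter (fun w => G.Adj v w)).card

/-- The cyclomatic number `ν(G) = |E| - |V| + 1`, as an integer. -/
def cyclomatic {V : Type u} (G : Digraph V) [Fintype V] [DecidableRel G.Adj] : ℤ :=
  ((edgeFinset G).card : ℤ) - (Fintype.card V : ℤ) + 1

/-- A directed walk of length `k` in `G`. -/
def IsWalk {V : Type u} (G : Digraph V) {k : ℕ} (w : Fin (k + 1) → V) : Prop :=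
  ∀ i : Fin k, G.Adj (w i.castSucc) (w i.succ)

instance {V : Type u} (G : Digraph V) [DecidableRel G.Adj] {k : ℕ} :
    DecidablePred (IsWalk G (k := k)) :=
  fun w => inferInstanceAs (Decidable (∀ i : Fin k, G.Adj (w i.castSucc) (w i.succ)))

/-- A bundled finite digraph. -/
structure FinDigraph where
  V : Type
  [fin : Fintype V]
  [deq : DecidableEq V]
  G : Digraph V
  [dec : DecidableRel G.Adj]

attribute [instance] FinDigraph.fin FinDigraph.deq FinDigraph.dec

/-- One straight-converting step: the bundled line digraph. -/
def FinDigraph.line (H : FinDigraph) : FinDigraph where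
  V := {e : H.V × H.V // H.G.Adj e.1 e.2}
  G := lineDigraph H.G

/-- The `j`-fold iterated line digraph. -/
def FinDigraph.iterLine (H : FinDigraph) : ℕ → FinDigraph
  | 0 => H
  | j + 1 => (H.iterLine j).line

/-- Canonical: every vertex simple. -/
def FinDigraph.Canonical (H : FinDigraph) : Prop :=
  ∀ v : H.V, indeg H.G v ≤ 1 ∨ outdeg H.G v ≤ 1

/-- Contains a complicated vertex. -/
def FinDigraph.HasComplicated (H : FinDigraph) : Prop :=
  ∃ v : H.V, 2 ≤ indeg H.G v ∧ 2 ≤ outdeg H.G v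

/-- An `l₃₁`-interval of length `ℓ`. -/
def IsL31 {V : Type u} (G : Digraph V) [Fintype V] [DecidableRel G.Adj] {ℓ : ℕ}
    (w : Fin (ℓ + 1) → V) : Prop :=
  IsWalk G w ∧ 2 ≤ indeg G (w 0) ∧ 2 ≤ outdeg G (w (Fin.last ℓ)) ∧
    ∀ i : Fin (ℓ + 1), 0 < (i : ℕ) → (i : ℕ) < ℓ →
      indeg G (w i) = 1 ∧ outdeg G (w i) = 1

/-- A directed cycle of length `k`. -/
def IsCycle {V : Type u} (G : Digraph V) {k : ℕ} (w : Fin (k + 1) → V) : Prop :=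
  IsWalk G w ∧ w 0 = w (Fin.last k) ∧
    ∀ i j : Fin (k + 1), (i : ℕ) < k → (j : ℕ) < k → w i = w j → i = j

/-- `G` has a contour: a directed cycle with both an entry edge and an exit edge. -/
def HasContour {V : Type u} (G : Digraph V) : Prop :=
  ∃ (k : ℕ) (w : Fin (k + 2) → V), IsCycle G (k := k + 1) w ∧
    (∃ a b : V, G.Adj a b ∧ (∃ i, w i = b) ∧
      ¬ ∃ i : Fin (k + 1), w i.castSucc = a ∧ w i.succ = b) ∧
    (∃ a b : V, G.Adj a b ∧ (∃ i, w i = a) ∧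
      ¬ ∃ i : Fin (k + 1), w i.castSucc = a ∧ w i.succ = b)

section Infra

variable {V : Type u} (G : Digraph V) [Fintype V] [DecidableEq V] [DecidableRel G.Adj]

lemma indeg_line (e : {e : V × V // G.Adj e.1 e.2}) :
    indeg (lineDigraph G) e = indeg G e.1.1 := by
  rw [indeg, indeg, ← Fintype.card_subtype, ← Fintype.card_subtype]
  exact Fintype.card_congr
    { toFun := fun f => ⟨f.1.1.1, f.2 ▸ f.1.2⟩
      invFun := fun u => ⟨⟨(u.1, e.1.1), u.2⟩, rfl⟩
      left_inv := fun f => by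
        apply Subtype.ext; apply Subtype.ext
        exact Prod.ext rfl f.2.symm
      right_inv := fun u => rfl }

lemma outdeg_line (e : {e : V × V // G.Adj e.1 e.2}) :
    outdeg (lineDigraph G) e = outdeg G e.1.2 := by
  rw [outdeg, outdeg, ← Fintype.card_subtype, ← Fintype.card_subtype]
  exact Fintype.card_congr
    { toFun := fun f => ⟨f.1.1.2, f.2 ▸ f.1.2⟩
      invFun := fun w => ⟨⟨(e.1.2, w.1), w.2⟩, rfl⟩
      left_inv := fun f => by
        apply Subtype.ext; apply Subtype.ext
        exact Prod.ext f.2 rfl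
      right_inv := fun w => rfl }

lemma two_le_indeg {u₁ u₂ v : V} (h₁ : G.Adj u₁ v) (h₂ : G.Adj u₂ v) (hne : u₁ ≠ u₂) :
    2 ≤ indeg G v := by
  rw [indeg]
  refine Finset.one_lt_card.mpr ⟨u₁, ?_, u₂, ?_, hne⟩ <;>
    simp [h₁, h₂]

lemma two_le_outdeg {v w₁ w₂ : V} (h₁ : G.Adj v w₁) (h₂ : G.Adj v w₂) (hne : w₁ ≠ w₂) :
    2 ≤ outdeg G v := by
  rw [outdeg]
  refine Finset.one_lt_card.mpr ⟨w₁, ?_, w₂, ?_, hne⟩ <;>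
    simp [h₁, h₂]

lemma exists_two_in {v : V} (h : 2 ≤ indeg G v) :
    ∃ u₁ u₂ : V, G.Adj u₁ v ∧ G.Adj u₂ v ∧ u₁ ≠ u₂ := by
  obtain ⟨a, ha, b, hb, hne⟩ := Finset.one_lt_card.mp h
  simp only [Finset.mem_filter, Finset.mem_univ, true_and] at ha hb
  exact ⟨a, b, ha, hb, hne⟩

lemma exists_two_out {v : V} (h : 2 ≤ outdeg G v) :
    ∃ w₁ w₂ : V, G.Adj v w₁ ∧ G.Adj v w₂ ∧ w₁ ≠ w₂ := by
  obtain ⟨a, ha, b, hb, hne⟩ := Finset.one_lt_card.mp h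
  simp only [Finset.mem_filter, Finset.mem_univ, true_and] at ha hb
  exact ⟨a, b, ha, hb, hne⟩

end Infra

/-- A walk of length `n` from a vertex of indegree ≥ 2 to a vertex of outdegree ≥ 2. -/
def HasLongWalk (H : FinDigraph) (n : ℕ) : Prop :=
  ∃ w : Fin (n + 1) → H.V, IsWalk H.G w ∧ 2 ≤ indeg H.G (w 0) ∧
    2 ≤ outdeg H.G (w (Fin.last n))

lemma iterLine_succ_comm (H : FinDigraph) (j : ℕ) :
    H.iterLine (j + 1) = (H.line).iterLine j := by
  induction j generalizing H with
  | zero => rfl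
  | succ n ih =>
    show (H.iterLine (n + 1)).line = _
    rw [ih]
    rfl
lemma indeg_line' (H : FinDigraph) (e : H.line.V) :
    indeg H.line.G e = indeg H.G e.1.1 := by
  rw [indeg, indeg, ← Fintype.card_subtype, ← Fintype.card_subtype]
  exact Fintype.card_congr
    { toFun := fun f => ⟨f.1.1.1, f.2 ▸ f.1.2⟩
      invFun := fun u => ⟨⟨(u.1, e.1.1), u.2⟩, rfl⟩
      left_inv := fun f => by
        apply Subtype.ext; apply Subtype.ext
        exact Prod.ext rfl f.2.symm
      right_inv := fun u => rfl }

lemma outdeg_line' (H : FinDigraph) (e : H.line.V) :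
    outdeg H.line.G e = outdeg H.G e.1.2 := by
  rw [outdeg, outdeg, ← Fintype.card_subtype, ← Fintype.card_subtype]
  exact Fintype.card_congr
    { toFun := fun f => ⟨f.1.1.2, f.2 ▸ f.1.2⟩
      invFun := fun w => ⟨⟨(e.1.2, w.1), w.2⟩, rfl⟩
      left_inv := fun f => by
        apply Subtype.ext; apply Subtype.ext
        exact Prod.ext f.2 rfl
      right_inv := fun w => rfl }

lemma hasLongWalk_line (H : FinDigraph) (n : ℕ) :
    HasLongWalk H.line n ↔ HasLongWalk H (n + 1) := by
  constructor
  · rintro ⟨w', hw', hin, hout⟩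
    let w : Fin (n + 2) → H.V := fun i =>
      if h : (i : ℕ) < n + 1 then (w' ⟨i, h⟩).1.1 else (w' (Fin.last n)).1.2
    have hcast : ∀ i : Fin (n + 1), w i.castSucc = (w' i).1.1 := by
      intro i
      show dite _ _ _ = _
      rw [dif_pos (show ((i.castSucc : Fin (n + 2)) : ℕ) < n + 1 from by exact i.isLt)]
      congr 1 <;> exact Fin.ext (by simp)
    have hsucc : ∀ i : Fin (n + 1), w i.succ = (w' i).1.2 := by
      intro i
      show dite _ _ _ = _
      by_cases h : (i : ℕ) + 1 < n + 1
      · rw [dif_pos (show ((i.succ : Fin (n + 2)) : ℕ) < n + 1 from by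
          simpa using h)]
        have hstep : (w' i).1.2 = (w' ⟨(i : ℕ) + 1, h⟩).1.1 := by
          have h2 := hw' ⟨(i : ℕ), by omega⟩
          exact h2
        rw [hstep]
        congr 1 <;> exact Fin.ext (by simp)
      · have hi : i = Fin.last n := Fin.ext (by have := i.isLt; simp; omega)
        rw [dif_neg (show ¬ ((i.succ : Fin (n + 2)) : ℕ) < n + 1 from by
          simp [Fin.val_succ]; omega)]
        rw [hi]
    refine ⟨w, ?_, ?_, ?_⟩
    · intro i
      rw [hcast i, hsucc i]
      exact (w' i).2
    · have e0 : w 0 = (w' 0).1.1 := by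
        have := hcast 0
        rwa [show ((0 : Fin (n + 1)).castSucc) = (0 : Fin (n + 2)) from Fin.ext (by simp)]
          at this
      rw [e0, ← indeg_line' H (w' 0)]
      exact hin
    · have el : w (Fin.last (n + 1)) = (w' (Fin.last n)).1.2 := by
        show dite _ _ _ = _
        rw [dif_neg (by simp)]
      rw [el, ← outdeg_line' H (w' (Fin.last n))]
      exact hout
  · rintro ⟨w, hw, hin, hout⟩
    refine ⟨fun i => ⟨(w i.castSucc, w i.succ), hw i⟩, ?_, ?_, ?_⟩
    · intro i
      show w (i.castSucc.succ) = w (i.succ.castSucc)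
      congr 1 <;> exact Fin.ext (by simp)
    · refine le_of_le_of_eq ?_ (indeg_line' H _).symm
      have : ((0 : Fin (n + 1)).castSucc) = (0 : Fin (n + 2)) := Fin.ext (by simp)
      show 2 ≤ indeg H.G (w (0 : Fin (n+1)).castSucc)
      rw [this]; exact hin
    · refine le_of_le_of_eq ?_ (outdeg_line' H _).symm
      have : ((Fin.last n).succ) = Fin.last (n + 1) := Fin.ext (by simp)
      show 2 ≤ outdeg H.G (w (Fin.last n).succ)
      rw [this]; exact hout

lemma hasComplicated_iterLine_iff (H : FinDigraph) (j : ℕ) :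
    (H.iterLine j).HasComplicated ↔ HasLongWalk H j := by
  induction j generalizing H with
  | zero =>
    constructor
    · rintro ⟨v, h1, h2⟩
      exact ⟨fun _ => v, fun i => i.elim0, h1, h2⟩
    · rintro ⟨w, _, h1, h2⟩
      exact ⟨w 0, h1, by exact h2⟩
  | succ n ih =>
    rw [iterLine_succ_comm, ih, hasLongWalk_line]
lemma hasLongWalk_of_contour (H : FinDigraph) (h : HasContour H.G) (M : ℕ) :
    ∃ j : ℕ, M < j ∧ HasLongWalk H j := by
  obtain ⟨k, w, ⟨hwalk, hclose, hinj⟩, ⟨a₁, b₁, hab₁, ⟨i₁, hi₁⟩, hne₁⟩,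
    ⟨a₂, b₂, hab₂, ⟨i₂, hi₂⟩, hne₂⟩⟩ := h
  have hL : 0 < k + 1 := Nat.succ_pos k
  set c : ℕ → H.V := fun n =>
    w ⟨n % (k + 1), lt_of_lt_of_le (Nat.mod_lt _ hL) (by omega)⟩ with hc
  have hceq : ∀ a b : ℕ, a % (k + 1) = b % (k + 1) → c a = c b := by
    intro a b hab
    show w _ = w _
    congr 1 <;> exact Fin.ext hab
  have hcsmall : ∀ a : ℕ, ∀ _h : a < k + 1, c a = w ⟨a, by omega⟩ := by
    intro a _h
    show w _ = w _
    congr 1 <;> exact Fin.ext (Nat.mod_eq_of_lt _h)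
  have hper : ∀ n m : ℕ, c (n + m * (k + 1)) = c n := by
    intro n m
    exact hceq _ _ (by rw [Nat.add_mul_mod_self_right])
  have hadj : ∀ n : ℕ, H.G.Adj (c n) (c (n + 1)) := by
    intro n
    have hmlt : n % (k + 1) < k + 1 := Nat.mod_lt _ hL
    have hA := hwalk ⟨n % (k + 1), hmlt⟩
    have hmod : (n + 1) % (k + 1) = (n % (k + 1) + 1) % (k + 1) := by
      rw [Nat.add_mod n 1, Nat.add_mod (n % (k + 1)) 1,
        Nat.mod_mod_of_dvd n (dvd_refl (k + 1))]
    have e1 : c n = w (Fin.castSucc ⟨n % (k + 1), hmlt⟩) := by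
      show w _ = w _
      congr 1 <;> exact Fin.ext rfl
    have e2 : c (n + 1) = w (Fin.succ ⟨n % (k + 1), hmlt⟩) := by
      by_cases h2 : n % (k + 1) + 1 < k + 1
      · show w _ = w _
        congr 1 <;> exact Fin.ext (by
          simp only [Fin.val_succ]
          rw [hmod, Nat.mod_eq_of_lt h2])
      · have hm1 : n % (k + 1) + 1 = k + 1 := by omega
        have h0 : (n + 1) % (k + 1) = 0 := by rw [hmod, hm1, Nat.mod_self]
        calc c (n + 1) = w 0 := by
              show w _ = w _
              congr 1 <;> exact Fin.ext (by simp [h0])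
          _ = w (Fin.last (k + 1)) := hclose
          _ = w (Fin.succ ⟨n % (k + 1), hmlt⟩) := by
              congr 1 <;> exact Fin.ext (by simp [Fin.val_succ, hm1])
    rw [e1, e2]
    exact hA
  have hrep : ∀ i : Fin (k + 2), c ((i : ℕ) % (k + 1)) = w i := by
    intro i
    by_cases hlt : (i : ℕ) < k + 1
    · rw [hcsmall _ (Nat.mod_lt _ hL)]
      congr 1 <;> exact Fin.ext (by simp [Nat.mod_eq_of_lt hlt])
    · have h2 : (i : ℕ) = k + 1 := by have := i.isLt; omega
      have : ((i : ℕ) % (k + 1)) = 0 := by simp [h2]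
      rw [this, hcsmall 0 (by omega), show (⟨0, by omega⟩ : Fin (k + 2)) = 0 from rfl,
        hclose]
      congr 1 <;> exact Fin.ext (by simp [h2])
  set q₁ : ℕ := (i₁ : ℕ) % (k + 1) with hq₁def
  set q₂ : ℕ := (i₂ : ℕ) % (k + 1) with hq₂def
  have hq₁lt : q₁ < k + 1 := Nat.mod_lt _ hL
  have hq₂lt : q₂ < k + 1 := Nat.mod_lt _ hL
  have hcq₁ : c q₁ = b₁ := by rw [hq₁def, hrep i₁, hi₁]
  have hcq₂ : c q₂ = a₂ := by rw [hq₂def, hrep i₂, hi₂]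
  -- the cycle edge into b₁
  have hxedge : H.G.Adj (c (q₁ + k)) b₁ := by
    have := hadj (q₁ + k)
    rwa [show q₁ + k + 1 = q₁ + 1 * (k + 1) from by omega, hper, hcq₁] at this
  have hxne : c (q₁ + k) ≠ a₁ := by
    intro hx
    apply hne₁
    have hr : (q₁ + k) % (k + 1) < k + 1 := Nat.mod_lt _ hL
    refine ⟨⟨(q₁ + k) % (k + 1), hr⟩, ?_, ?_⟩
    · rw [← hx]
      show w _ = w _
      congr 1 <;> exact Fin.ext rfl
    · by_cases hq : 0 < q₁
      · have hrval : (q₁ + k) % (k + 1) = q₁ - 1 := by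
          rw [show q₁ + k = (q₁ - 1) + 1 * (k + 1) from by omega,
            Nat.add_mul_mod_self_right, Nat.mod_eq_of_lt (by omega)]
        rw [← hcq₁, hcsmall q₁ hq₁lt]
        congr 1 <;> exact Fin.ext (by simp [Fin.val_succ, hrval]; omega)
      · have hq0 : q₁ = 0 := by omega
        have hrval : (q₁ + k) % (k + 1) = k := by
          rw [hq0, Nat.zero_add, Nat.mod_eq_of_lt (by omega)]
        rw [← hcq₁]
        calc w (⟨(q₁ + k) % (k + 1), hr⟩ : Fin (k + 1)).succ
            = w (Fin.last (k + 1)) := by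
              congr 1 <;> exact Fin.ext (by simp [Fin.val_succ, hrval])
          _ = w 0 := hclose.symm
          _ = c q₁ := by
              rw [hcsmall q₁ hq₁lt]
              congr 1 <;> exact Fin.ext (by simp [hq0])
  have hinb₁ : 2 ≤ indeg H.G b₁ := two_le_indeg H.G hab₁ hxedge (Ne.symm hxne)
  -- the cycle edge out of a₂
  have hyedge : H.G.Adj a₂ (c (q₂ + 1)) := by
    have := hadj q₂
    rwa [hcq₂] at this
  have hyne : c (q₂ + 1) ≠ b₂ := by
    intro hy
    apply hne₂
    refine ⟨⟨q₂, hq₂lt⟩, ?_, ?_⟩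
    · rw [← hcq₂, hcsmall q₂ hq₂lt]
      congr 1 <;> exact Fin.ext rfl
    · rw [← hy]
      by_cases h2 : q₂ + 1 < k + 1
      · rw [hcsmall _ h2]
        congr 1 <;> exact Fin.ext rfl
      · have hm1 : q₂ + 1 = k + 1 := by omega
        rw [show q₂ + 1 = 0 + 1 * (k + 1) from by omega, hper,
          hcsmall 0 (by omega), show (⟨0, by omega⟩ : Fin (k + 2)) = 0 from rfl, hclose]
        congr 1 <;> exact Fin.ext (by simp [Fin.val_succ, hm1])
  have houta₂ : 2 ≤ outdeg H.G a₂ := two_le_outdeg H.G hab₂ hyedge (Ne.symm hyne)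
  -- build the long walk
  set m : ℕ := M + q₁ + 1 with hm
  have hmm : m ≤ m * (k + 1) := Nat.le_mul_of_pos_right m hL
  set j : ℕ := q₂ + m * (k + 1) - q₁ with hj
  have hjM : M < j := by omega
  refine ⟨j, hjM, fun t => c (q₁ + (t : ℕ)), ?_, ?_, ?_⟩
  · intro t
    show H.G.Adj (c (q₁ + ((t.castSucc : Fin (j + 1)) : ℕ))) (c (q₁ + ((t.succ : Fin (j + 1)) : ℕ)))
    rw [Fin.coe_castSucc, Fin.val_succ,
      show q₁ + ((t : ℕ) + 1) = (q₁ + (t : ℕ)) + 1 from by omega]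
    exact hadj _
  · show 2 ≤ indeg H.G (c (q₁ + ((0 : Fin (j + 1)) : ℕ)))
    rw [show q₁ + ((0 : Fin (j + 1)) : ℕ) = q₁ from by simp, hcq₁]
    exact hinb₁
  · show 2 ≤ outdeg H.G (c (q₁ + ((Fin.last j : Fin (j + 1)) : ℕ)))
    rw [show q₁ + ((Fin.last j : Fin (j + 1)) : ℕ) = q₂ + m * (k + 1) from by
      simp [Fin.val_last]; omega, hper, hcq₂]
    exact houta₂
lemma contour_of_longWalk (H : FinDigraph) (j : ℕ) (hj : Fintype.card H.V < j)
    (hlw : HasLongWalk H j) : HasContour H.G := by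
  classical
  obtain ⟨w, hw, hin, hout⟩ := hlw
  set c : ℕ → H.V := fun n => w ⟨min n j, by omega⟩ with hcdef
  have hcW : ∀ n : ℕ, ∀ _h : n ≤ j, c n = w ⟨n, by omega⟩ := by
    intro n h
    show w _ = w _
    congr 1 <;> exact Fin.ext (Nat.min_eq_left h)
  have hc0 : c 0 = w 0 := by
    rw [hcW 0 (by omega)]
    congr 1 <;> exact Fin.ext (by simp)
  have hcj : c j = w (Fin.last j) := by
    rw [hcW j le_rfl]
    congr 1 <;> exact Fin.ext (by simp)
  have hcFin : ∀ i : Fin (j + 1), c (i : ℕ) = w i := by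
    intro i
    rw [hcW _ (by omega)]
  have hadj : ∀ n : ℕ, n < j → H.G.Adj (c n) (c (n + 1)) := by
    intro n hn
    rw [hcW n (by omega), hcW (n + 1) (by omega)]
    have e1 : (⟨n, by omega⟩ : Fin (j + 1)) = Fin.castSucc ⟨n, hn⟩ := Fin.ext rfl
    have e2 : (⟨n + 1, by omega⟩ : Fin (j + 1)) = Fin.succ ⟨n, hn⟩ := Fin.ext rfl
    rw [e1, e2]
    exact hw ⟨n, hn⟩
  have hex : ∃ t : ℕ, ∃ s, s < t ∧ t ≤ j ∧ c s = c t := by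
    have hninj : ¬Function.Injective w := by
      intro hi
      have hcard := Fintype.card_le_of_injective w hi
      rw [Fintype.card_fin] at hcard
      omega
    rw [Function.not_injective_iff] at hninj
    obtain ⟨a, b, hab, hne⟩ := hninj
    rcases Nat.lt_trichotomy (a : ℕ) (b : ℕ) with h | h | h
    · exact ⟨b, a, h, by omega, by rw [hcFin a, hcFin b]; exact hab⟩
    · exact absurd (Fin.ext h) hne
    · exact ⟨a, b, h, by omega, by rw [hcFin a, hcFin b]; exact hab.symm⟩
  set t : ℕ := Nat.find hex with htdef
  obtain ⟨s, hst, htj, hcst⟩ := Nat.find_spec hex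
  rw [← htdef] at hst htj hcst
  have hmin : ∀ t' : ℕ, t' < t → ¬ ∃ s', s' < t' ∧ t' ≤ j ∧ c s' = c t' :=
    fun t' h => Nat.find_min hex h
  have hinj' : ∀ a b : ℕ, a < t → b < t → c a = c b → a = b := by
    intro a b ha hb he
    rcases Nat.lt_trichotomy a b with h | h | h
    · exact absurd ⟨a, h, by omega, he⟩ (hmin b hb)
    · exact h
    · exact absurd ⟨b, h, by omega, he.symm⟩ (hmin a ha)
  set k : ℕ := t - s - 1 with hkdef
  have hks : s + (k + 1) = t := by omega
  refine ⟨k, fun i => c (s + (i : ℕ)), ⟨?_, ?_, ?_⟩, ?_, ?_⟩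
  -- the cycle is a walk
  · intro i
    show H.G.Adj (c (s + ((i.castSucc : Fin (k + 2)) : ℕ)))
      (c (s + ((i.succ : Fin (k + 2)) : ℕ)))
    rw [Fin.coe_castSucc, Fin.val_succ,
      show s + ((i : ℕ) + 1) = (s + (i : ℕ)) + 1 from by omega]
    have : (i : ℕ) < k + 1 := i.isLt
    exact hadj _ (by omega)
  -- the cycle is closed
  · show c (s + ((0 : Fin (k + 2)) : ℕ)) = c (s + ((Fin.last (k + 1)) : ℕ))
    rw [show s + ((0 : Fin (k + 2)) : ℕ) = s from by simp,
      show s + ((Fin.last (k + 1)) : ℕ) = t from by simp [Fin.val_last]; omega]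
    exact hcst
  -- the cycle is injective
  · intro i i' hik hik' he
    have := hinj' (s + (i : ℕ)) (s + (i' : ℕ)) (by omega) (by omega) he
    exact Fin.ext (by omega)
  -- entry edge
  · by_cases hs : 0 < s
    · refine ⟨c (s - 1), c s, ?_,
        ⟨0, by show c (s + ((0 : Fin (k + 2)) : ℕ)) = c s; simp⟩, ?_⟩
      · have := hadj (s - 1) (by omega)
        rwa [show s - 1 + 1 = s from by omega] at this
      · rintro ⟨i, h1, h2⟩
        have hi : (i : ℕ) < k + 1 := i.isLt
        have h1a : c (s + ((i.castSucc : Fin (k + 2)) : ℕ)) = c (s - 1) := h1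
        have h1' : c (s + (i : ℕ)) = c (s - 1) := by
          rwa [Fin.coe_castSucc] at h1a
        have := hinj' (s + (i : ℕ)) (s - 1) (by omega) (by omega) h1'
        omega
    · have hs0 : s = 0 := by omega
      have hindeg : 2 ≤ indeg H.G (c s) := by rw [hs0, hc0]; exact hin
      obtain ⟨u₁, u₂, hu₁, hu₂, hu12⟩ := exists_two_in H.G hindeg
      obtain ⟨u, hu, huc⟩ : ∃ u, H.G.Adj u (c s) ∧ u ≠ c (t - 1) := by
        rcases eq_or_ne u₁ (c (t - 1)) with h | h
        · exact ⟨u₂, hu₂, by rw [← h]; exact hu12.symm⟩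
        · exact ⟨u₁, hu₁, h⟩
      refine ⟨u, c s, hu,
        ⟨0, by show c (s + ((0 : Fin (k + 2)) : ℕ)) = c s; simp⟩, ?_⟩
      rintro ⟨i, h1, h2⟩
      have hi : (i : ℕ) < k + 1 := i.isLt
      have h2a : c (s + ((i.succ : Fin (k + 2)) : ℕ)) = c s := h2
      have h2' : c (s + (i : ℕ) + 1) = c s := by
        rw [show s + (i : ℕ) + 1 = s + ((i.succ : Fin (k + 2)) : ℕ) from by
          rw [Fin.val_succ]; omega]
        exact h2a
      rcases Nat.lt_or_ge (s + (i : ℕ) + 1) t with hlt | hge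
      · have := hinj' (s + (i : ℕ) + 1) s hlt (by omega) h2'
        omega
      · have heq : s + (i : ℕ) + 1 = t := by omega
        apply huc
        have h1a : c (s + ((i.castSucc : Fin (k + 2)) : ℕ)) = u := h1
        rw [← h1a, Fin.coe_castSucc]
        congr 1
        omega
  -- exit edge
  · set P : ℕ → Prop := fun n => ∃ m, s ≤ m ∧ m < t ∧ c m = c n with hPdef
    haveI : DecidablePred P := Classical.decPred P
    set p : ℕ := Nat.findGreatest P j with hpdef
    have hPt : P t := ⟨s, le_rfl, hst, hcst⟩
    have htp : t ≤ p := Nat.le_findGreatest htj hPt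
    have hpj : p ≤ j := Nat.findGreatest_le j
    have hPp : P p := Nat.findGreatest_spec htj hPt
    obtain ⟨m, hsm, hmt, hcm⟩ := hPp
    have hmem : ∃ i : Fin (k + 2), c (s + (i : ℕ)) = c p := by
      refine ⟨⟨m - s, by omega⟩, ?_⟩
      rw [show s + ((⟨m - s, by omega⟩ : Fin (k + 2)) : ℕ) = m from by simp; omega]
      exact hcm
    by_cases hp : p < j
    · refine ⟨c p, c (p + 1), hadj p hp, hmem, ?_⟩
      rintro ⟨i, h1, h2⟩
      have hi : (i : ℕ) < k + 1 := i.isLt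
      have h2a : c (s + ((i.succ : Fin (k + 2)) : ℕ)) = c (p + 1) := h2
      have h2' : c (s + (i : ℕ) + 1) = c (p + 1) := by
        rw [show s + (i : ℕ) + 1 = s + ((i.succ : Fin (k + 2)) : ℕ) from by
          rw [Fin.val_succ]; omega]
        exact h2a
      have hnP : ¬ P (p + 1) :=
        Nat.findGreatest_is_greatest (n := j) (k := p + 1) (by omega) (by omega)
      apply hnP
      rcases Nat.lt_or_ge (s + (i : ℕ) + 1) t with hlt | hge
      · exact ⟨s + (i : ℕ) + 1, by omega, hlt, h2'⟩
      · have heq : s + (i : ℕ) + 1 = t := by omega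
        refine ⟨s, le_rfl, hst, ?_⟩
        rw [hcst, ← heq]
        exact h2'
    · have hpj' : p = j := by omega
      have houtdeg : 2 ≤ outdeg H.G (c p) := by rw [hpj', hcj]; exact hout
      obtain ⟨y₁, y₂, hy₁, hy₂, hy12⟩ := exists_two_out H.G houtdeg
      obtain ⟨y, hy, hyc⟩ : ∃ y, H.G.Adj (c p) y ∧ y ≠ c (m + 1) := by
        rcases eq_or_ne y₁ (c (m + 1)) with h | h
        · exact ⟨y₂, hy₂, by rw [← h]; exact hy12.symm⟩
        · exact ⟨y₁, hy₁, h⟩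
      refine ⟨c p, y, hy, hmem, ?_⟩
      rintro ⟨i, h1, h2⟩
      have hi : (i : ℕ) < k + 1 := i.isLt
      have h1a : c (s + ((i.castSucc : Fin (k + 2)) : ℕ)) = c p := h1
      have h1' : c (s + (i : ℕ)) = c m := by
        rw [hcm]
        rwa [Fin.coe_castSucc] at h1a
      have hsi : s + (i : ℕ) = m := hinj' _ _ (by omega) hmt h1'
      apply hyc
      have h2a : c (s + ((i.succ : Fin (k + 2)) : ℕ)) = y := h2
      rw [← h2a, Fin.val_succ]
      congr 1
      omega
/-- Theorem 14: `G` contains a contour iff complicated vertices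
arise in the iterated line digraphs at arbitrarily late steps. -/
theorem progressive_heteronomous (H : FinDigraph) :
    HasContour H.G ↔
      ∀ M : ℕ, ∃ j : ℕ, M < j ∧ (H.iterLine j).HasComplicated := by
  constructor
  · intro h M
    obtain ⟨j, hj, hlw⟩ := hasLongWalk_of_contour H h M
    exact ⟨j, hj, (hasComplicated_iterLine_iff H j).mpr hlw⟩
  · intro h
    obtain ⟨j, hj, hc⟩ := h (Fintype.card H.V)
    exact contour_of_longWalk H j hj ((hasComplicated_iterLine_iff H j).mp hc)
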